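/- Let n ≥ 1 be a natural number, let f : ℝ → ℝ be of class C^{n−1}, and suppose the (n−1)-st derivative f^{(n−1)} is Lipschitz with constant K ≥ 0. Then for all t ∈ ℝ and all m₁, …, mₙ ∈ ℝ, |Σ_{I ⊆ {1,…,n}} (−1)^{|I|} f(t + Σ_{j∈I} m_j)| ≤ K · ∏_{j=1}^{n} |m_j|. -/

import Mathlib

open Finset

/-- Mean-value step: if `deriv F` is `K`-Lipschitz, then `x ↦ F x - F (x + c)` is
`K * |c|`-Lipschitz. -/
lemma lip_step (F : ℝ → ℝ) (K c : ℝ) (hF : Differentiable ℝ F)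
    (hd : ∀ x y : ℝ, |deriv F x - deriv F y| ≤ K * |x - y|) (x y : ℝ) :
    |(F x - F (x + c)) - (F y - F (y + c))| ≤ (K * |c|) * |x - y| := by
  set h : ℝ → ℝ := fun w => F w - F (w + c) with hh
  have hdiff : ∀ z : ℝ, DifferentiableAt ℝ (fun w => F (w + c)) z := by
    intro z
    exact (hF (z + c)).comp z (differentiableAt_id.add_const c)
  have hderiv : ∀ z : ℝ, deriv h z = deriv F z - deriv F (z + c) := by
    intro z
    rw [hh]
    rw [deriv_fun_sub (hF z) (hdiff z), deriv_comp_add_const]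
  have key := Convex.norm_image_sub_le_of_norm_deriv_le (f := h) (C := K * |c|)
    (fun z _ => ((hF z).sub (hdiff z))) ?_ convex_univ (Set.mem_univ y) (Set.mem_univ x)
  · simpa [Real.norm_eq_abs] using key
  · intro z _
    rw [hderiv z, Real.norm_eq_abs]
    calc |deriv F z - deriv F (z + c)| ≤ K * |z - (z + c)| := hd z (z + c)
      _ = K * |c| := by rw [show z - (z + c) = -c by ring, abs_neg]

lemma key_lemma {ι : Type*} [DecidableEq ι] (s : Finset ι) :
    ∀ (f : ℝ → ℝ) (K : ℝ), 0 ≤ K → 1 ≤ s.card → ContDiff ℝ (s.card - 1 : ℕ) f →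
    (∀ x y : ℝ, |iteratedDeriv (s.card - 1) f x - iteratedDeriv (s.card - 1) f y|
        ≤ K * |x - y|) →
    ∀ (t : ℝ) (m : ι → ℝ),
      |∑ I ∈ s.powerset, (-1 : ℝ) ^ I.card * f (t + ∑ j ∈ I, m j)| ≤ K * ∏ j ∈ s, |m j| := by
  induction s using Finset.cons_induction with
  | empty => intro f K hK hs; simp at hs
  | cons a u ha IH =>
    intro f K hK hs hf hlip t m
    -- split the powerset sum
    have hsplit : ∑ I ∈ (Finset.cons a u ha).powerset,
        (-1 : ℝ) ^ I.card * f (t + ∑ j ∈ I, m j)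
        = ∑ I ∈ u.powerset, (-1 : ℝ) ^ I.card *
            (f (t + ∑ j ∈ I, m j) - f ((t + ∑ j ∈ I, m j) + m a)) := by
      rw [Finset.cons_eq_insert, Finset.sum_powerset_insert ha]
      rw [← Finset.sum_add_distrib]
      refine Finset.sum_congr rfl fun I hI => ?_
      have haI : a ∉ I := fun h => ha (Finset.mem_powerset.1 hI h)
      rw [Finset.card_insert_of_notMem haI, Finset.sum_insert haI]
      rw [show t + (m a + ∑ j ∈ I, m j) = (t + ∑ j ∈ I, m j) + m a by ring]
      ring
    rw [hsplit, Finset.prod_cons]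
    have hcard : (Finset.cons a u ha).card = u.card + 1 := Finset.card_cons ha
    rcases Nat.eq_zero_or_pos u.card with hu0 | hu1
    · -- base case: u = ∅
      have : u = ∅ := Finset.card_eq_zero.1 hu0
      subst this
      simp only [Finset.powerset_empty, Finset.sum_singleton, Finset.card_empty, pow_zero,
        Finset.sum_empty, add_zero, one_mul, Finset.prod_empty, mul_one]
      have h0 : (Finset.cons a (∅ : Finset ι) ha).card - 1 = 0 := by simp
      rw [h0] at hlip
      simp only [iteratedDeriv_zero] at hlip
      calc |f t - f (t + m a)| ≤ K * |t - (t + m a)| := hlip t (t + m a)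
        _ = K * |m a| := by rw [show t - (t + m a) = -(m a) by ring, abs_neg]
    · -- inductive case: u ≠ ∅, set k = u.card - 1
      obtain ⟨k, hk⟩ : ∃ k, u.card = k + 1 := ⟨u.card - 1, (Nat.succ_pred_eq_of_pos hu1).symm⟩
      have hcard1 : (Finset.cons a u ha).card - 1 = k + 1 := by omega
      rw [hcard1] at hf hlip
      set c := m a with hc
      set g : ℝ → ℝ := fun x => f x - f (x + c) with hg
      have hfk : ContDiff ℝ (k : ℕ) f := hf.of_le (by exact_mod_cast Nat.le_succ k)
      have hshift : ContDiff ℝ (k : ℕ) (fun x : ℝ => f (x + c)) :=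
        hfk.comp (contDiff_id.add contDiff_const)
      have hgk : ContDiff ℝ (k : ℕ) g := hfk.sub hshift
      have hgd : ∀ x : ℝ, iteratedDeriv k g x
          = iteratedDeriv k f x - iteratedDeriv k f (x + c) := by
        intro x
        have h1 : iteratedDeriv k g x = iteratedDeriv k f x
            - iteratedDeriv k (fun x : ℝ => f (x + c)) x := by
          rw [hg]
          have := iteratedDerivWithin_sub (Set.mem_univ x) uniqueDiffOn_univ
            (f := f) (g := fun x : ℝ => f (x + c)) (n := k)
            hfk.contDiffWithinAt hshift.contDiffWithinAt
          simpa [iteratedDerivWithin_univ, Pi.sub_def] using this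
        rw [h1, iteratedDeriv_comp_add_const]
      have hF : Differentiable ℝ (iteratedDeriv k f) :=
        hf.differentiable_iteratedDeriv k (by exact_mod_cast Nat.lt_succ_self k)
      have hdF : ∀ x y : ℝ, |deriv (iteratedDeriv k f) x - deriv (iteratedDeriv k f) y|
          ≤ K * |x - y| := by
        intro x y
        have : deriv (iteratedDeriv k f) = iteratedDeriv (k + 1) f :=
          (iteratedDeriv_succ).symm
        rw [this]
        exact hlip x y
      have hglip : ∀ x y : ℝ, |iteratedDeriv k g x - iteratedDeriv k g y|
          ≤ (K * |c|) * |x - y| := by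
        intro x y
        rw [hgd x, hgd y]
        exact lip_step (iteratedDeriv k f) K c hF hdF x y
      have hucard : u.card - 1 = k := by omega
      have := IH g (K * |c|) (by positivity) (by omega)
        (by rw [hucard]; exact hgk) (by rw [hucard]; exact hglip) t m
      calc |∑ I ∈ u.powerset, (-1 : ℝ) ^ I.card * g (t + ∑ j ∈ I, m j)|
          ≤ (K * |c|) * ∏ j ∈ u, |m j| := this
        _ = K * (|m a| * ∏ j ∈ u, |m j|) := by rw [hc]; ring

theorem alternating_difference_bound (n : ℕ) (hn : 1 ≤ n) (f : ℝ → ℝ) (K : ℝ) (hK : 0 ≤ K)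
    (hf : ContDiff ℝ (n - 1 : ℕ) f)
    (hlip : ∀ s t : ℝ,
      |iteratedDeriv (n - 1) f s - iteratedDeriv (n - 1) f t| ≤ K * |s - t|)
    (t : ℝ) (m : Fin n → ℝ) :
    |∑ I : Finset (Fin n), (-1 : ℝ) ^ I.card * f (t + ∑ j ∈ I, m j)| ≤
      K * ∏ j, |m j| := by
  have hcard : (Finset.univ : Finset (Fin n)).card = n := Finset.card_univ.trans (Fintype.card_fin n)
  have := key_lemma (Finset.univ : Finset (Fin n)) f K hK (by rw [hcard]; exact hn)
    (by rw [hcard]; exact hf) (by rw [hcard]; exact hlip) t m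
  rwa [Finset.powerset_univ] at this
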